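/- Let d ∈ ℕ and ω ∈ ℝ^d be such that m·ω ≠ 0 for every nonzero m ∈ ℤ^d. Let B, C : ℤ^d → ℂ satisfy: Σ_m |B_m| < ∞, C_0 = 0, Σ_{m≠0} |C_m| < ∞ and Σ_{m≠0} |C_m|/|m·ω| < ∞. Define b(t) = Σ_{m∈ℤ^d} B_m·e^{i(m·ω)t}, c(t) = Σ_{m∈ℤ^d} C_m·e^{i(m·ω)t}, and h(t) = b(t)·∫₀ᵗ c(τ) dτ. Then: (i) for every n ∈ ℤ^d the sum H_n = Σ_{m∈ℤ^d, m≠0} i·C_m·(B_n − B_{n−m})/(m·ω) converges absolutely, Σ_n |H_n| < ∞, and h(t) = Σ_{n∈ℤ^d} H_n·e^{i(n·ω)t} for all t ∈ ℝ; (ii) if moreover B_0 = 0 and C_m·B_{−m} = C_{−m}·B_m for all nonzero m ∈ ℤ^d, then H_0 = 0 and the mean value M(h) exists and equals 0. -/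

import Mathlib

open Filter

noncomputable section

/-- The mean value `M(h)` of a function `h : ℝ → ℂ`:
`M(h) = L` iff `(1/(2T)) ∫_{-T}^{T} h(t) dt → L` as `T → +∞`. -/
def MeanValueIs (h : ℝ → ℂ) (L : ℂ) : Prop :=
  Tendsto (fun T : ℝ => (1 / (2 * T)) • ∫ t in (-T)..T, h t) atTop (nhds L)

/-- Scalar product `m·ω = m₁ω₁ + ⋯ + m_dω_d` of a multi-index with a frequency vector. -/
def dotp {d : ℕ} (m : Fin d → ℤ) (ω : Fin d → ℝ) : ℝ := ∑ i, (m i : ℝ) * ω i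

namespace FourierAux

lemma dotp_add {d : ℕ} (m n : Fin d → ℤ) (ω : Fin d → ℝ) :
    dotp (m + n) ω = dotp m ω + dotp n ω := by
  simp [dotp, add_mul, Finset.sum_add_distrib]

lemma dotp_neg {d : ℕ} (m : Fin d → ℤ) (ω : Fin d → ℝ) :
    dotp (-m) ω = -dotp m ω := by
  simp [dotp, Finset.sum_neg_distrib]

lemma dotp_sub {d : ℕ} (m n : Fin d → ℤ) (ω : Fin d → ℝ) :
    dotp (m - n) ω = dotp m ω - dotp n ω := by
  rw [sub_eq_add_neg, dotp_add, dotp_neg, sub_eq_add_neg]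

lemma dotp_zero {d : ℕ} (ω : Fin d → ℝ) : dotp (0 : Fin d → ℤ) ω = 0 := by
  simp [dotp]

/-- exponential `e^{i x t}`. -/
def ee (x t : ℝ) : ℂ := Complex.exp (Complex.I * x * t)

lemma continuous_ee (x : ℝ) : Continuous fun t => ee x t := by
  unfold ee; continuity

lemma norm_ee (x t : ℝ) : ‖ee x t‖ = 1 := by
  rw [ee, show Complex.I * x * t = (x * t : ℝ) * Complex.I by push_cast; ring]
  rw [Complex.norm_exp_ofReal_mul_I]

lemma abs_ee (x t : ℝ) : ‖ee x t‖ = 1 := norm_ee x t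

lemma ee_mul (x y t : ℝ) : ee x t * ee y t = ee (x + y) t := by
  rw [ee, ee, ee, ← Complex.exp_add]
  push_cast; ring_nf

lemma ee_zero (x : ℝ) : ee x 0 = 1 := by simp [ee]

lemma hasDerivAt_ee (x : ℝ) (t : ℝ) :
    HasDerivAt (fun t => ee x t) (Complex.I * x * ee x t) t := by
  have h1 : HasDerivAt (fun z : ℂ => Complex.I * x * z) (Complex.I * x) (t : ℂ) := by
    simpa using (hasDerivAt_id (t : ℂ)).const_mul (Complex.I * x)
  have h2 := h1.cexp
  have h3 := h2.comp_ofReal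
  simpa [ee, mul_comm] using h3

lemma integral_ee {x : ℝ} (hx : x ≠ 0) (a b : ℝ) :
    ∫ t in a..b, ee x t = (ee x b - ee x a) / (Complex.I * x) := by
  have hix : (Complex.I * x : ℂ) ≠ 0 := by
    simp [Complex.I_ne_zero, Complex.ofReal_eq_zero, hx]
  have hF : ∀ t : ℝ, HasDerivAt (fun t => ee x t / (Complex.I * x)) (ee x t) t := by
    intro t
    have := (hasDerivAt_ee x t).div_const (Complex.I * x)
    refine this.congr_deriv ?_
    rw [mul_div_cancel_left₀ _ hix]
  have := intervalIntegral.integral_eq_sub_of_hasDerivAt (fun t _ => hF t)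
    ((continuous_ee x).intervalIntegrable a b)
  rw [this]
  ring

lemma norm_integral_ee_le {x : ℝ} (hx : x ≠ 0) (a b : ℝ) :
    ‖∫ t in a..b, ee x t‖ ≤ 2 / |x| := by
  rw [integral_ee hx a b, norm_div]
  have h1 : ‖ee x b - ee x a‖ ≤ 2 := by
    calc ‖ee x b - ee x a‖ ≤ ‖ee x b‖ + ‖ee x a‖ := norm_sub_le _ _
    _ = 2 := by rw [norm_ee, norm_ee]; norm_num
  have h2 : ‖(Complex.I * x : ℂ)‖ = |x| := by
    simp
  rw [h2]
  have hxpos : (0:ℝ) < |x| := abs_pos.mpr hx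
  gcongr

end FourierAux

open FourierAux

theorem fourier_coefficients_of_primitive
    (d : ℕ) (ω : Fin d → ℝ)
    (hω : ∀ m : Fin d → ℤ, m ≠ 0 → dotp m ω ≠ 0)
    (B C : (Fin d → ℤ) → ℂ)
    (hB : Summable fun m : Fin d → ℤ => ‖B m‖)
    (hC0 : C 0 = 0)
    (hC : Summable fun m : Fin d → ℤ => if m = 0 then 0 else ‖C m‖)
    (hCω : Summable fun m : Fin d → ℤ => if m = 0 then 0 else ‖C m‖ / |dotp m ω|)
    (b c h : ℝ → ℂ)
    (hb : ∀ t : ℝ, b t = ∑' m : Fin d → ℤ, B m * Complex.exp (Complex.I * (dotp m ω : ℂ) * (t : ℂ)))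
    (hc : ∀ t : ℝ, c t = ∑' m : Fin d → ℤ, C m * Complex.exp (Complex.I * (dotp m ω : ℂ) * (t : ℂ)))
    (hh : ∀ t : ℝ, h t = b t * ∫ τ in (0:ℝ)..t, c τ)
    (H : (Fin d → ℤ) → ℂ)
    (hH : ∀ n : Fin d → ℤ, H n = ∑' m : Fin d → ℤ,
      if m = 0 then 0 else Complex.I * C m * (B n - B (n - m)) / (dotp m ω : ℂ)) :
    (∀ n : Fin d → ℤ, Summable fun m : Fin d → ℤ =>
      ‖if m = 0 then (0 : ℂ) else Complex.I * C m * (B n - B (n - m)) / (dotp m ω : ℂ)‖) ∧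
    (Summable fun n : Fin d → ℤ => ‖H n‖) ∧
    (∀ t : ℝ, h t = ∑' n : Fin d → ℤ, H n * Complex.exp (Complex.I * (dotp n ω : ℂ) * (t : ℂ))) ∧
    (B 0 = 0 →
      (∀ m : Fin d → ℤ, m ≠ 0 → C m * B (-m) = C (-m) * B m) →
      H 0 = 0 ∧ MeanValueIs h 0) := by
  classical
  -- the coefficients of the primitive
  set D : (Fin d → ℤ) → ℂ := fun m => if m = 0 then 0 else C m / (Complex.I * (dotp m ω : ℝ)) with hDdef
  have hCnorm : Summable fun m : (Fin d → ℤ) => ‖C m‖ := by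
    refine hC.congr fun m => ?_
    by_cases hm : m = 0 <;> simp [hm, hC0]
  have hDnorm : ∀ m : (Fin d → ℤ), ‖D m‖ = if m = 0 then 0 else ‖C m‖ / |dotp m ω| := by
    intro m
    by_cases hm : m = 0
    · simp [hDdef, hm]
    · simp only [hDdef, hm, if_false, norm_div]
      congr 1
      simp
  have hD : Summable fun m : (Fin d → ℤ) => ‖D m‖ := hCω.congr fun m => (hDnorm m).symm
  have hDC : ∀ m : (Fin d → ℤ), D m * (Complex.I * (dotp m ω : ℝ)) = C m := by
    intro m
    by_cases hm : m = 0
    · simp [hDdef, hm, hC0, dotp_zero]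
    · have hx : (dotp m ω : ℝ) ≠ 0 := hω m hm
      have hix : (Complex.I * (dotp m ω : ℝ) : ℂ) ≠ 0 := by
        simp [Complex.I_ne_zero, Complex.ofReal_eq_zero, hx]
      simp only [hDdef, hm, if_false]
      field_simp
      exact mul_div_cancel_right₀ _ (by exact_mod_cast hx)
  -- the key pointwise term identity
  have hterm : ∀ n m : (Fin d → ℤ),
      (if m = 0 then (0:ℂ) else Complex.I * C m * (B n - B (n - m)) / (dotp m ω : ℂ))
        = D m * (B (n - m) - B n) := by
    intro n m
    by_cases hm : m = 0
    · simp [hm, hDdef]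
    · have hx : (dotp m ω : ℝ) ≠ 0 := hω m hm
      have hx' : ((dotp m ω : ℝ) : ℂ) ≠ 0 := by exact_mod_cast hx
      simp only [hm, if_false, hDdef]
      rw [div_mul_eq_mul_div, div_eq_div_iff hx' (mul_ne_zero Complex.I_ne_zero hx')]
      linear_combination (C m * (B n - B (n - m)) * (dotp m ω : ℂ)) * Complex.I_sq
  -- summability of the H-terms
  have hPnorm : Summable fun p : (Fin d → ℤ) × (Fin d → ℤ) => ‖B (p.1 - p.2) * D p.2‖ := by
    have base : Summable fun z : (Fin d → ℤ) × (Fin d → ℤ) => ‖B z.1 * D z.2‖ := hB.mul_norm hD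
    let σ : ((Fin d → ℤ) × (Fin d → ℤ)) ≃ ((Fin d → ℤ) × (Fin d → ℤ)) :=
      ⟨fun p => (p.1 - p.2, p.2), fun p => (p.1 + p.2, p.2),
        fun p => by simp, fun p => by simp⟩
    exact σ.summable_iff.mpr base
  have hfiber : ∀ n : (Fin d → ℤ), Summable fun m : (Fin d → ℤ) => ‖B (n - m) * D m‖ :=
    fun n => hPnorm.prod_factor n
  have htri : ∀ n m : (Fin d → ℤ),
      ‖D m * (B (n - m) - B n)‖ ≤ ‖B (n - m) * D m‖ + ‖D m‖ * ‖B n‖ := by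
    intro n m
    rw [show D m * (B (n - m) - B n) = B (n - m) * D m - D m * B n from by ring]
    exact (norm_sub_le _ _).trans_eq (by simp [norm_mul])
  have hsummD : ∀ n : (Fin d → ℤ), Summable fun m : (Fin d → ℤ) => ‖D m * (B (n - m) - B n)‖ := by
    intro n
    exact Summable.of_nonneg_of_le (fun m => norm_nonneg _) (htri n)
      ((hfiber n).add (hD.mul_right ‖B n‖))
  have hsumm_i : ∀ n : (Fin d → ℤ), Summable fun m : (Fin d → ℤ) =>
      ‖if m = 0 then (0 : ℂ) else Complex.I * C m * (B n - B (n - m)) / (dotp m ω : ℂ)‖ := by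
    intro n
    exact (hsummD n).congr fun m => by rw [hterm n m]
  have hHE : ∀ n : (Fin d → ℤ), H n = ∑' m : (Fin d → ℤ), D m * (B (n - m) - B n) := by
    intro n; rw [hH n]; exact tsum_congr fun m => hterm n m
  -- ∑_k ∑_m ‖B (k-m) D m‖ summable
  have hPsum : Summable fun k : (Fin d → ℤ) => ∑' m : (Fin d → ℤ), ‖B (k - m) * D m‖ :=
    (hPnorm.hasSum.prod_fiberwise (fun k => (hfiber k).hasSum)).summable
  have hHsum : Summable fun n : (Fin d → ℤ) => ‖H n‖ := by
    have hbound : ∀ n : (Fin d → ℤ),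
        ‖H n‖ ≤ (∑' m : (Fin d → ℤ), ‖B (n - m) * D m‖) + (∑' m : (Fin d → ℤ), ‖D m‖) * ‖B n‖ := by
      intro n
      rw [hHE n]
      calc ‖∑' m : (Fin d → ℤ), D m * (B (n - m) - B n)‖
          ≤ ∑' m : (Fin d → ℤ), ‖D m * (B (n - m) - B n)‖ := norm_tsum_le_tsum_norm (hsummD n)
        _ ≤ ∑' m : (Fin d → ℤ), (‖B (n - m) * D m‖ + ‖D m‖ * ‖B n‖) :=
            Summable.tsum_le_tsum (htri n) (hsummD n) ((hfiber n).add (hD.mul_right ‖B n‖))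
        _ = (∑' m : (Fin d → ℤ), ‖B (n - m) * D m‖) + (∑' m : (Fin d → ℤ), ‖D m‖ * ‖B n‖) :=
            Summable.tsum_add (hfiber n) (hD.mul_right ‖B n‖)
        _ = _ := by rw [tsum_mul_right]
    exact Summable.of_nonneg_of_le (fun n => norm_nonneg _) hbound
      (hPsum.add (hB.mul_left _))
  -- Step A: the primitive of c
  have hcfun : c = fun t => ∑' m : (Fin d → ℤ), C m * ee (dotp m ω) t := funext fun t => hc t
  have hc_cont : Continuous c := by
    rw [hcfun]
    exact continuous_tsum (fun m => continuous_const.mul (continuous_ee _)) hCnorm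
      (fun m t => le_of_eq (by rw [norm_mul, norm_ee, mul_one]))
  have hg_deriv : ∀ t : ℝ,
      HasDerivAt (fun s => ∑' m : (Fin d → ℤ), D m * (ee (dotp m ω) s - 1)) (c t) t := by
    intro t
    have hder : ∀ (m : (Fin d → ℤ)) (y : ℝ),
        HasDerivAt (fun s => D m * (ee (dotp m ω) s - 1))
          ((fun (m : (Fin d → ℤ)) (y : ℝ) => D m * (Complex.I * (dotp m ω) * ee (dotp m ω) y)) m y) y :=
      fun m y => ((hasDerivAt_ee (dotp m ω) y).sub_const 1).const_mul (D m)
    have hbound : ∀ (m : (Fin d → ℤ)) (y : ℝ),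
        ‖D m * (Complex.I * (dotp m ω) * ee (dotp m ω) y)‖ ≤ (if m = 0 then 0 else ‖C m‖) := by
      intro m y
      by_cases hm : m = 0
      · simp [hDdef, hm]
      · rw [norm_mul, norm_mul, norm_ee, mul_one, hDnorm m, if_neg hm, if_neg hm]
        have hx : dotp m ω ≠ 0 := hω m hm
        have hnx : ‖Complex.I * ((dotp m ω : ℝ) : ℂ)‖ = |dotp m ω| := by
          simp
        rw [hnx, div_mul_cancel₀ _ (abs_ne_zero.mpr hx)]
    have hsum0 : Summable fun m : (Fin d → ℤ) => D m * (ee (dotp m ω) (0:ℝ) - 1) := by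
      simp only [ee_zero, sub_self, mul_zero]
      exact summable_zero
    have key := hasDerivAt_tsum hC hder hbound hsum0 t
    refine key.congr_deriv ?_
    rw [hc t]
    refine tsum_congr fun m => ?_
    rw [show D m * (Complex.I * (dotp m ω : ℝ) * ee (dotp m ω) t)
        = (D m * (Complex.I * (dotp m ω : ℝ))) * ee (dotp m ω) t from by ring, hDC m]
    rfl
  have hF_deriv : ∀ t : ℝ, HasDerivAt (fun s => ∫ τ in (0:ℝ)..s, c τ) (c t) t := by
    intro t
    exact intervalIntegral.integral_hasDerivAt_right (hc_cont.intervalIntegrable _ _)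
      (hc_cont.stronglyMeasurableAtFilter _ _) hc_cont.continuousAt
  have hkeyint : ∀ t : ℝ, (∫ τ in (0:ℝ)..t, c τ) = ∑' m : (Fin d → ℤ), D m * (ee (dotp m ω) t - 1) := by
    intro t
    have hdiff : ∀ s : ℝ, HasDerivAt
        (fun y => (∑' m : (Fin d → ℤ), D m * (ee (dotp m ω) y - 1)) - ∫ τ in (0:ℝ)..y, c τ) 0 s :=
      fun s => by have := (hg_deriv s).sub (hF_deriv s); rw [sub_self] at this; exact this
    have hconst := is_const_of_deriv_eq_zero (𝕜 := ℝ)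
      (fun s => (hdiff s).differentiableAt) (fun s => (hdiff s).deriv) t 0
    have h0 : (∑' m : (Fin d → ℤ), D m * (ee (dotp m ω) (0:ℝ) - 1)) - ∫ τ in (0:ℝ)..(0:ℝ), c τ = 0 := by
      simp [ee_zero]
    rw [h0] at hconst
    exact (sub_eq_zero.mp hconst).symm
  -- Step B: Fourier expansion of h
  have hbsum : ∀ t : ℝ, Summable fun n : (Fin d → ℤ) => ‖B n * ee (dotp n ω) t‖ :=
    fun t => hB.congr fun n => by rw [norm_mul, norm_ee, mul_one]
  have hdsum : ∀ t : ℝ, Summable fun m : (Fin d → ℤ) => ‖D m * ee (dotp m ω) t‖ :=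
    fun t => hD.congr fun m => by rw [norm_mul, norm_ee, mul_one]
  have hmain : ∀ t : ℝ, h t = ∑' n : (Fin d → ℤ), H n * ee (dotp n ω) t := by
    intro t
    have hbt : b t = ∑' n : (Fin d → ℤ), B n * ee (dotp n ω) t := hb t
    rw [hh t, hkeyint t, hbt]
    have hsplit : (∑' m : (Fin d → ℤ), D m * (ee (dotp m ω) t - 1))
        = (∑' m : (Fin d → ℤ), D m * ee (dotp m ω) t) - ∑' m : (Fin d → ℤ), D m := by
      rw [← Summable.tsum_sub ((hdsum t).of_norm) hD.of_norm]
      exact tsum_congr fun m => by ring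
    rw [hsplit, mul_sub]
    have hprod : (∑' n : (Fin d → ℤ), B n * ee (dotp n ω) t) * (∑' m : (Fin d → ℤ), D m * ee (dotp m ω) t)
        = ∑' p : (Fin d → ℤ) × (Fin d → ℤ), (B p.1 * ee (dotp p.1 ω) t) * (D p.2 * ee (dotp p.2 ω) t) :=
      tsum_mul_tsum_of_summable_norm (hbsum t) (hdsum t)
    let σ : ((Fin d → ℤ) × (Fin d → ℤ)) ≃ ((Fin d → ℤ) × (Fin d → ℤ)) :=
      ⟨fun p => (p.1 - p.2, p.2), fun p => (p.1 + p.2, p.2),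
        fun p => by simp, fun p => by simp⟩
    have hre : (∑' p : (Fin d → ℤ) × (Fin d → ℤ), (B p.1 * ee (dotp p.1 ω) t) * (D p.2 * ee (dotp p.2 ω) t))
        = ∑' p : (Fin d → ℤ) × (Fin d → ℤ), (B (p.1 - p.2) * D p.2) * ee (dotp p.1 ω) t := by
      rw [← σ.tsum_eq (fun p : (Fin d → ℤ) × (Fin d → ℤ) =>
        (B p.1 * ee (dotp p.1 ω) t) * (D p.2 * ee (dotp p.2 ω) t))]
      refine tsum_congr fun p => ?_
      show (B (p.1 - p.2) * ee (dotp (p.1 - p.2) ω) t) * (D p.2 * ee (dotp p.2 ω) t)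
        = (B (p.1 - p.2) * D p.2) * ee (dotp p.1 ω) t
      rw [show (B (p.1 - p.2) * ee (dotp (p.1 - p.2) ω) t) * (D p.2 * ee (dotp p.2 ω) t)
          = (B (p.1 - p.2) * D p.2) * (ee (dotp (p.1 - p.2) ω) t * ee (dotp p.2 ω) t) from by ring,
        ee_mul, dotp_sub, sub_add_cancel]
    have hGsum : Summable fun p : (Fin d → ℤ) × (Fin d → ℤ) =>
        (B (p.1 - p.2) * D p.2) * ee (dotp p.1 ω) t := by
      apply Summable.of_norm
      exact hPnorm.congr fun p => by simp [norm_mul, abs_ee]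
    have hfub := Summable.tsum_prod hGsum
    have hinner : ∀ k : (Fin d → ℤ), (∑' m : (Fin d → ℤ), (B (k - m) * D m) * ee (dotp k ω) t)
        = (∑' m : (Fin d → ℤ), B (k - m) * D m) * ee (dotp k ω) t := fun k => tsum_mul_right
    have hsb : (∑' n : (Fin d → ℤ), B n * ee (dotp n ω) t) * (∑' m : (Fin d → ℤ), D m)
        = ∑' n : (Fin d → ℤ), (B n * ee (dotp n ω) t) * (∑' m : (Fin d → ℤ), D m) :=
      tsum_mul_right.symm
    rw [hprod, hre, hfub, tsum_congr hinner, hsb]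
    have hs1 : Summable fun k : (Fin d → ℤ) =>
        (∑' m : (Fin d → ℤ), B (k - m) * D m) * ee (dotp k ω) t := by
      apply Summable.of_norm
      refine Summable.of_nonneg_of_le (fun k => norm_nonneg _) (fun k => ?_) hPsum
      rw [norm_mul, norm_ee, mul_one]
      exact norm_tsum_le_tsum_norm (hfiber k)
    have hs2 : Summable fun k : (Fin d → ℤ) =>
        (B k * ee (dotp k ω) t) * (∑' m : (Fin d → ℤ), D m) :=
      ((hbsum t).of_norm).mul_right _
    rw [← Summable.tsum_sub hs1 hs2]
    refine tsum_congr fun k => ?_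
    have hs3 : Summable fun m : (Fin d → ℤ) => D m * B (k - m) :=
      Summable.of_norm ((hfiber k).congr fun m => by rw [norm_mul, norm_mul, mul_comm])
    have hs4 : Summable fun m : (Fin d → ℤ) => D m * B k := hD.of_norm.mul_right _
    have hk : H k = (∑' m : (Fin d → ℤ), D m * B (k - m)) - (∑' m : (Fin d → ℤ), D m) * B k := by
      rw [hHE k, ← tsum_mul_right, ← Summable.tsum_sub hs3 hs4]
      exact tsum_congr fun m => by ring
    rw [hk, show (∑' m : (Fin d → ℤ), B (k - m) * D m) = ∑' m : (Fin d → ℤ), D m * B (k - m) from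
      tsum_congr fun m => mul_comm _ _]
    ring
  refine ⟨hsumm_i, hHsum, fun t => by simpa [ee] using hmain t, ?_⟩
  intro hB0 hsym
  have hH0 : H 0 = 0 := by
    rw [hH 0]
    set f : (Fin d → ℤ) → ℂ := fun m =>
      if m = 0 then 0 else Complex.I * C m * (B 0 - B (0 - m)) / (dotp m ω : ℂ) with hfdef
    have hneg : ∀ m : (Fin d → ℤ), f (-m) = -f m := by
      intro m
      by_cases hm : m = 0
      · simp [hfdef, hm]
      · have hm' : -m ≠ 0 := fun hcon => hm (by simpa using hcon)
        simp only [hfdef, hm, hm', if_false]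
        have hx : dotp m ω ≠ 0 := hω m hm
        have hx' : ((dotp m ω : ℝ) : ℂ) ≠ 0 := by exact_mod_cast hx
        rw [show (0:Fin d → ℤ) - -m = m from by simp, show (0:Fin d → ℤ) - m = -m from by simp,
          dotp_neg, hB0]
        push_cast
        rw [div_neg, neg_inj, div_eq_div_iff hx' hx']
        linear_combination Complex.I * (dotp m ω : ℂ) * hsym m hm
    have h1 : (∑' m : (Fin d → ℤ), f m) = ∑' m : (Fin d → ℤ), f (-m) :=
      ((Equiv.neg (Fin d → ℤ)).tsum_eq f).symm
    have h2 : (∑' m : (Fin d → ℤ), f (-m)) = -∑' m : (Fin d → ℤ), f m := by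
      rw [tsum_congr hneg, tsum_neg]
    have h3 := h1.trans h2
    have h4 : (2:ℂ) * ∑' m : (Fin d → ℤ), f m = 0 := by linear_combination h3
    exact (mul_eq_zero.mp h4).resolve_left two_ne_zero
  refine ⟨hH0, ?_⟩
  have hee_meas : ∀ n : (Fin d → ℤ), Continuous fun t : ℝ => H n * ee (dotp n ω) t :=
    fun n => continuous_const.mul (continuous_ee _)
  have hbig : ∀ᶠ T : ℝ in atTop, (1 / (2 * T) : ℝ) • (∫ t in (-T)..T, h t)
      = ∑' n : (Fin d → ℤ),
          (((1 / (2 * T) : ℝ) : ℂ) * (H n * ∫ t in (-T)..T, ee (dotp n ω) t)) := by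
    filter_upwards [eventually_gt_atTop (0:ℝ)] with T hT
    have hle : (-T) ≤ T := by linarith
    have hF_int : ∀ n : (Fin d → ℤ), MeasureTheory.Integrable (fun t => H n * ee (dotp n ω) t)
        (MeasureTheory.volume.restrict (Set.Ioc (-T) T)) :=
      fun n => (hee_meas n).integrableOn_Ioc
    have hnorm_int : ∀ n : (Fin d → ℤ),
        (∫ t in Set.Ioc (-T) T, ‖H n * ee (dotp n ω) t‖) = ‖H n‖ * (2 * T) := by
      intro n
      rw [MeasureTheory.setIntegral_congr_fun measurableSet_Ioc
        (fun t _ => by rw [norm_mul, norm_ee, mul_one] : ∀ t ∈ Set.Ioc (-T) T, ‖H n * ee (dotp n ω) t‖ = ‖H n‖),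
        MeasureTheory.setIntegral_const, Real.volume_real_Ioc_of_le (by linarith),
        smul_eq_mul]
      ring
    have hsumm : Summable fun n : (Fin d → ℤ) => ∫ t in Set.Ioc (-T) T, ‖H n * ee (dotp n ω) t‖ :=
      (hHsum.mul_right (2 * T)).congr fun n => (hnorm_int n).symm
    have hswap := MeasureTheory.integral_tsum_of_summable_integral_norm hF_int hsumm
    calc (1 / (2 * T) : ℝ) • (∫ t in (-T)..T, h t)
        = (1 / (2 * T) : ℝ) • ∑' n : (Fin d → ℤ), ∫ t in Set.Ioc (-T) T, H n * ee (dotp n ω) t := by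
          rw [intervalIntegral.integral_of_le hle,
            MeasureTheory.setIntegral_congr_fun measurableSet_Ioc
              (fun t _ => hmain t : ∀ t ∈ Set.Ioc (-T) T,
                h t = ∑' n : (Fin d → ℤ), H n * ee (dotp n ω) t), ← hswap]
      _ = ∑' n : (Fin d → ℤ),
          (((1 / (2 * T) : ℝ) : ℂ) * (H n * ∫ t in (-T)..T, ee (dotp n ω) t)) := by
          rw [Complex.real_smul, ← tsum_mul_left]
          refine tsum_congr fun n => ?_
          rw [intervalIntegral.integral_of_le hle, MeasureTheory.integral_const_mul]
  show Tendsto (fun T : ℝ => (1 / (2 * T)) • ∫ t in (-T)..T, h t) atTop (nhds 0)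
  have hdom := tendsto_tsum_of_dominated_convergence
    (𝓕 := atTop) (f := fun (T : ℝ) (n : Fin d → ℤ) =>
      ((1 / (2 * T) : ℝ) : ℂ) * (H n * ∫ t in (-T)..T, ee (dotp n ω) t))
    (g := fun _ => (0:ℂ)) (bound := fun n => ‖H n‖) hHsum ?_ ?_
  · refine Tendsto.congr' (by filter_upwards [hbig] with T hT using hT.symm) ?_
    simpa [tsum_zero] using hdom
  · -- pointwise limits
    intro n
    by_cases hn : n = 0
    · subst hn
      simp only [hH0, zero_mul, mul_zero]
      exact tendsto_const_nhds
    · have hx : dotp n ω ≠ 0 := hω n hn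
      apply squeeze_zero_norm' (a := fun T : ℝ => (‖H n‖ * (2 / |dotp n ω|)) / (2 * T))
      · filter_upwards [eventually_gt_atTop (0:ℝ)] with T hT
        rw [norm_mul, norm_mul]
        have h1 : ‖((1 / (2 * T) : ℝ) : ℂ)‖ = 1 / (2 * T) := by
          rw [Complex.norm_real, Real.norm_of_nonneg (by positivity)]
        rw [h1]
        have h2 : ‖∫ t in (-T)..T, ee (dotp n ω) t‖ ≤ 2 / |dotp n ω| :=
          norm_integral_ee_le hx (-T) T
        calc 1 / (2 * T) * (‖H n‖ * ‖∫ t in (-T)..T, ee (dotp n ω) t‖)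
            ≤ 1 / (2 * T) * (‖H n‖ * (2 / |dotp n ω|)) := by
              have : (0:ℝ) < 2 * T := by linarith
              gcongr
          _ = (‖H n‖ * (2 / |dotp n ω|)) / (2 * T) := by ring
      · have h2T : Tendsto (fun T : ℝ => 2 * T) atTop atTop :=
          Tendsto.const_mul_atTop two_pos tendsto_id
        exact Tendsto.div_atTop tendsto_const_nhds h2T
  · -- uniform bound
    filter_upwards [eventually_gt_atTop (0:ℝ)] with T hT
    intro n
    rw [norm_mul, norm_mul]
    have h1 : ‖((1 / (2 * T) : ℝ) : ℂ)‖ = 1 / (2 * T) := by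
      rw [Complex.norm_real, Real.norm_of_nonneg (by positivity)]
    have h2 : ‖∫ t in (-T)..T, ee (dotp n ω) t‖ ≤ 2 * T := by
      have := intervalIntegral.norm_integral_le_of_norm_le_const
        (C := 1) (f := fun t => ee (dotp n ω) t) (a := -T) (b := T)
        (fun t _ => le_of_eq (norm_ee _ _))
      calc ‖∫ t in (-T)..T, ee (dotp n ω) t‖ ≤ 1 * |T - (-T)| := this
        _ = 2 * T := by rw [one_mul, abs_of_pos (by linarith)]; ring
    rw [h1]
    calc 1 / (2 * T) * (‖H n‖ * ‖∫ t in (-T)..T, ee (dotp n ω) t‖)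
        ≤ 1 / (2 * T) * (‖H n‖ * (2 * T)) := by
          have : (0:ℝ) < 2 * T := by linarith
          gcongr
      _ = ‖H n‖ := by field_simp
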